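/- arXiv:2104.02266 — 2 statements merged into one kernel-verified Lean document; each statement's English description precedes it below -/
import Mathlib

section
/- If T is a tree with b(T) ≤ 2, then α_bn(T) ≤ n − b(T) + ρ(T), where n is the order of T. -/
open SimpleGraph Finset
open scoped Classical

noncomputable section

/-- Eccentricity of a vertex. -/
def gecc {V : Type*} (G : SimpleGraph V) [Fintype V] (v : V) : ℕ :=
  Finset.univ.sup fun u => G.dist v u

/-- A broadcast: `f v ≤ e(v)` for all `v`. -/
def IsBroadcast {V : Type*} (G : SimpleGraph V) [Fintype V] (f : V → ℕ) : Prop :=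
  ∀ v, f v ≤ gecc G v

/-- `u` hears `f` from `v`. -/
def Hears {V : Type*} (G : SimpleGraph V) (f : V → ℕ) (u v : V) : Prop :=
  0 < f v ∧ G.dist u v ≤ f v

/-- Boundary independent broadcast: a vertex hearing two or more broadcasting
vertices lies in the boundary of each. -/
def BnIndep {V : Type*} (G : SimpleGraph V) [Fintype V] (f : V → ℕ) : Prop :=
  IsBroadcast G f ∧
    ∀ w v₁ v₂, v₁ ≠ v₂ → Hears G f w v₁ → Hears G f w v₂ → G.dist w v₁ = f v₁

/-- Weight of a broadcast. -/
def bweight {V : Type*} [Fintype V] (f : V → ℕ) : ℕ := ∑ v, f v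

/-- The boundary independence number. -/
def alphaBn {V : Type*} (G : SimpleGraph V) [Fintype V] : ℕ :=
  sSup {w | ∃ f, BnIndep G f ∧ bweight f = w}

/-- Set of branch vertices (degree at least 3). -/
def branchSet {V : Type*} (G : SimpleGraph V) [Fintype V] : Finset V :=
  Finset.univ.filter fun v => 3 ≤ G.degree v

/-- `l` is a leaf joined to `v` by an endpath (all internal vertices of degree 2). -/
def IsEndpathTo {V : Type*} (G : SimpleGraph V) [Fintype V] (v l : V) : Prop :=
  G.degree l = 1 ∧ ∃ p : G.Walk v l, p.IsPath ∧
    ∀ u ∈ p.support, u ≠ v → u ≠ l → G.degree u = 2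

/-- Leaf set `L(v)` of a vertex `v`. -/
def leafSet {V : Type*} (G : SimpleGraph V) [Fintype V] (v : V) : Finset V :=
  Finset.univ.filter fun l => IsEndpathTo G v l

/-- `R(T)`: branch vertices with at most one leaf in their leaf set. -/
def rset {V : Type*} (G : SimpleGraph V) [Fintype V] : Finset V :=
  (branchSet G).filter fun v => (leafSet G v).card ≤ 1

/-- Edge `uv` is covered by broadcasting vertex `x`. -/
def Covers {V : Type*} (G : SimpleGraph V) (f : V → ℕ) (x u v : V) : Prop :=
  0 < f x ∧ G.Adj u v ∧ G.dist u x ≤ f x ∧ G.dist v x ≤ f x ∧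
    (G.dist u x < f x ∨ G.dist v x < f x)

/-- The graph `G - U_f^E` obtained by deleting all `f`-uncovered edges. -/
def coveredSubgraph {V : Type*} (G : SimpleGraph V) (f : V → ℕ) : SimpleGraph V where
  Adj u v := G.Adj u v ∧ ∃ x, Covers G f x u v
  symm := by
    constructor
    rintro u v ⟨h, x, h1, h2, h3, h4, h5⟩
    exact ⟨h.symm, x, h1, h2.symm, h4, h3, h5.symm⟩
  loopless := by constructor; rintro u ⟨h, -⟩; exact G.loopless.irrefl u h

/-- `f` is a maximal bn-independent broadcast. -/
def MaximalBn {V : Type*} (G : SimpleGraph V) [Fintype V] (f : V → ℕ) : Prop :=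
  BnIndep G f ∧ ∀ g, BnIndep G g → (∀ v, f v ≤ g v) → g = f

/-- The `f`-private boundary of `v`: vertices of `N_f(v)` not dominated once the
broadcast strength of `v` is lowered by one. -/
def privBoundary {V : Type*} (G : SimpleGraph V) (f : V → ℕ) (v : V) : Set V :=
  {u | G.dist u v ≤ f v ∧ ∀ x, ¬ Hears G (Function.update f v (f v - 1)) u x}

/-- The branch representation: branch vertices adjacent iff the path between them
contains no other branch vertex. -/
def branchRep {V : Type*} (G : SimpleGraph V) [Fintype V] : SimpleGraph V where
  Adj b₁ b₂ := b₁ ≠ b₂ ∧ 3 ≤ G.degree b₁ ∧ 3 ≤ G.degree b₂ ∧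
    ∀ p : G.Walk b₁ b₂, p.IsPath → ∀ u ∈ p.support, 3 ≤ G.degree u → u = b₁ ∨ u = b₂
  symm := by
    constructor
    rintro a b ⟨hab, ha, hb, h⟩
    refine ⟨hab.symm, hb, ha, fun p hp u hu hdeg => ?_⟩
    have hu' : u ∈ p.reverse.support := by
      rw [SimpleGraph.Walk.support_reverse]; exact List.mem_reverse.mpr hu
    exact (h p.reverse hp.reverse u hu' hdeg).symm
  loopless := by constructor; rintro v ⟨h, -⟩; exact h rfl

/-- Hearing independent broadcast. -/
def HIndep {V : Type*} (G : SimpleGraph V) [Fintype V] (f : V → ℕ) : Prop :=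
  IsBroadcast G f ∧ ∀ u v, u ≠ v → 0 < f u → 0 < f v → f v < G.dist u v

/-- The hearing independence number. -/
def alphaH {V : Type*} (G : SimpleGraph V) [Fintype V] : ℕ :=
  sSup {w | ∃ f, HIndep G f ∧ bweight f = w}

/-- Diameter. -/
def gdiam {V : Type*} (G : SimpleGraph V) [Fintype V] : ℕ :=
  Finset.univ.sup fun v => gecc G v

variable {V : Type*} [Fintype V] {T : SimpleGraph V}
set_option linter.unusedSectionVars false

private lemma bn_pl_eq_dist (hT : T.IsTree) {u v : V} {p : T.Walk u v} (hp : p.IsPath) :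
    p.length = T.dist u v := by
  obtain ⟨q, hq, hql⟩ := hT.isConnected.exists_path_of_dist u v
  have h : (⟨p, hp⟩ : T.Path u v) = ⟨q, hq⟩ := hT.IsAcyclic.path_unique _ _
  rw [show p = q from congrArg Subtype.val h, hql]

private lemma bn_dist_concat (hT : T.IsTree) {x w y : V} (h : T.Adj w y) {p : T.Walk x w}
    (hp : p.IsPath) (hy : y ∉ p.support) : T.dist x y = T.dist x w + 1 := by
  have hrp : (Walk.cons h.symm p.reverse).IsPath :=
    hp.reverse.cons (by simpa [Walk.support_reverse] using hy)
  have := bn_pl_eq_dist hT hrp.reverse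
  simp only [Walk.length_reverse, Walk.length_cons] at this
  rw [← this, bn_pl_eq_dist hT hp]

private lemma bn_adj_cases (hT : T.IsTree) (x : V) {w y : V} (h : T.Adj w y) :
    T.dist x y = T.dist x w + 1 ∨ T.dist x y + 1 = T.dist x w := by
  obtain ⟨p, hp, hpl⟩ := hT.isConnected.exists_path_of_dist x w
  by_cases hy : y ∈ p.support
  · right
    have h1 : (p.takeUntil y hy).length = T.dist x y := bn_pl_eq_dist hT (hp.takeUntil hy)
    have h2 : (p.dropUntil y hy).length = T.dist y w := bn_pl_eq_dist hT (hp.dropUntil hy)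
    have h3 : T.dist y w = 1 := dist_eq_one_iff_adj.mpr h.symm
    have h4 : (p.takeUntil y hy).length + (p.dropUntil y hy).length = p.length := by
      rw [← Walk.length_append, Walk.take_spec]
    omega
  · exact Or.inl (bn_dist_concat hT h hp hy)

private lemma bn_parent_unique (hT : T.IsTree) {x w y y' : V} (hy : T.Adj w y) (hy' : T.Adj w y')
    (hd : T.dist x y + 1 = T.dist x w) (hd' : T.dist x y' + 1 = T.dist x w) : y = y' := by
  obtain ⟨p, hp, hpl⟩ := hT.isConnected.exists_path_of_dist x w
  have hymem : y ∈ p.support := by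
    by_contra hc
    have := bn_dist_concat hT hy hp hc
    omega
  have hymem' : y' ∈ p.support := by
    by_contra hc
    have := bn_dist_concat hT hy' hp hc
    omega
  have key : ∀ (z : V) (hz : z ∈ p.support), T.dist x z + 1 = T.dist x w →
      z = p.getVert (T.dist x w - 1) := by
    intro z hz hdz
    have h1 : (p.takeUntil z hz).length = T.dist x z := bn_pl_eq_dist hT (hp.takeUntil hz)
    have h2 : ((p.takeUntil z hz).append (p.dropUntil z hz)).getVert
        (p.takeUntil z hz).length = z := by
      rw [Walk.getVert_append]
      simp
    rw [Walk.take_spec] at h2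
    rw [← h2, h1]
    congr 1
    omega
  rw [key y hymem hd, key y' hymem' hd']

private lemma bn_children_two (hT : T.IsTree) (x : V) {w : V} (hdeg : 3 ≤ T.degree w) :
    2 ≤ ((T.neighborFinset w).filter fun y => T.dist x y = T.dist x w + 1).card := by
  classical
  have hsub : T.neighborFinset w ⊆
      ((T.neighborFinset w).filter fun y => T.dist x y = T.dist x w + 1) ∪
      ((T.neighborFinset w).filter fun y => T.dist x y + 1 = T.dist x w) := by
    intro y hy
    rcases bn_adj_cases hT x (T.mem_neighborFinset w y |>.mp hy) with h | h
    · exact Finset.mem_union_left _ (Finset.mem_filter.mpr ⟨hy, h⟩)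
    · exact Finset.mem_union_right _ (Finset.mem_filter.mpr ⟨hy, h⟩)
  have h1 : ((T.neighborFinset w).filter fun y => T.dist x y + 1 = T.dist x w).card ≤ 1 := by
    refine Finset.card_le_one.mpr ?_
    intro a ha b hb
    rw [Finset.mem_filter] at ha hb
    exact bn_parent_unique hT (T.mem_neighborFinset w a |>.mp ha.1)
      (T.mem_neighborFinset w b |>.mp hb.1) ha.2 hb.2
  have h2 : T.degree w ≤
      ((T.neighborFinset w).filter fun y => T.dist x y = T.dist x w + 1).card +
      ((T.neighborFinset w).filter fun y => T.dist x y + 1 = T.dist x w).card := by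
    rw [← T.card_neighborFinset_eq_degree]
    exact (Finset.card_le_card hsub).trans (Finset.card_union_le _ _)
  omega

private lemma bn_dist_getVert_le (hc : T.Connected) {x u : V} (p : T.Walk x u) (i : ℕ) :
    T.dist x (p.getVert i) ≤ i := by
  induction p generalizing i with
  | nil => rw [Walk.getVert_of_length_le _ (by simp : Walk.nil.length ≤ i)]; simp [dist_self]
  | @cons a b c h q ih =>
    cases i with
    | zero => simp [Walk.getVert_zero, SimpleGraph.dist_self]
    | succ i =>
      rw [Walk.getVert_cons_succ]
      calc T.dist a (q.getVert i) ≤ T.dist a b + T.dist b (q.getVert i) := hc.dist_triangle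
        _ ≤ 1 + i := by
            have hd : T.dist a b ≤ 1 := SimpleGraph.dist_le (Walk.cons h Walk.nil)
            have := ih i
            omega
        _ = i + 1 := by omega

private lemma bn_dist_getVert_right (p : T.Walk x u) (i : ℕ) :
    T.dist (p.getVert i) u ≤ p.length - i := by
  induction p generalizing i with
  | nil =>
    rw [Walk.getVert_of_length_le _ (by simp : Walk.nil.length ≤ i)]
    simp [dist_self]
  | @cons a b c h q ih =>
    cases i with
    | zero =>
      rw [Walk.getVert_zero]
      simpa using SimpleGraph.dist_le (Walk.cons h q)
    | succ i =>
      rw [Walk.getVert_cons_succ]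
      simpa [Nat.succ_sub_succ] using ih i

private lemma bn_exists_dist_eq (hT : T.IsTree) {x u : V} {i : ℕ} (hi : i ≤ T.dist x u) :
    ∃ v, T.dist x v = i := by
  obtain ⟨p, hpl⟩ := hT.isConnected.exists_walk_length_eq_dist x u
  refine ⟨p.getVert i, ?_⟩
  have h1 := bn_dist_getVert_le hT.isConnected p i
  have h2 := bn_dist_getVert_right p i
  have h3 := hT.isConnected.dist_triangle (u := x) (v := p.getVert i) (w := u)
  omega




private lemma bn_fiber_decomp (hT : T.IsTree) (x : V) (k : ℕ) :
    ((univ : Finset V).filter fun u => T.dist x u < k).card =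
      ∑ i ∈ Finset.range k,
        (((univ : Finset V).filter fun u => T.dist x u < k).filter
          fun u => T.dist x u = i).card := by
  apply Finset.card_eq_sum_card_fiberwise
  intro u hu
  rw [Finset.mem_coe, Finset.mem_filter] at hu
  exact Finset.mem_range.mpr hu.2

private lemma bn_fiber_one (hT : T.IsTree) {x : V} {k : ℕ} (hk : ∃ u, k ≤ T.dist x u)
    {i : ℕ} (hi : i < k) :
    1 ≤ (((univ : Finset V).filter fun u => T.dist x u < k).filter
          fun u => T.dist x u = i).card := by
  obtain ⟨u, hu⟩ := hk
  obtain ⟨v, hv⟩ := bn_exists_dist_eq hT (le_trans (le_of_lt hi) hu)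
  refine Finset.card_pos.mpr ⟨v, ?_⟩
  simp [hv, hi]

private lemma bn_fiber_children (hT : T.IsTree) {x w : V} {k : ℕ} (hdeg : 3 ≤ T.degree w)
    (hw : T.dist x w + 2 ≤ k) :
    2 ≤ (((univ : Finset V).filter fun u => T.dist x u < k).filter
          fun u => T.dist x u = T.dist x w + 1).card := by
  refine le_trans (bn_children_two hT x hdeg) (Finset.card_le_card ?_)
  intro y hy
  rw [Finset.mem_filter] at hy
  simp only [Finset.mem_filter, Finset.mem_univ, true_and]
  exact ⟨by omega, hy.2⟩

private lemma bn_SL0 (hT : T.IsTree) {x : V} {k : ℕ} (hk : ∃ u, k ≤ T.dist x u) :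
    k ≤ ((univ : Finset V).filter fun u => T.dist x u < k).card := by
  rw [bn_fiber_decomp hT x k]
  calc k = ∑ _i ∈ Finset.range k, 1 := by simp
    _ ≤ _ := Finset.sum_le_sum fun i hi => bn_fiber_one hT hk (Finset.mem_range.mp hi)

private lemma bn_SL1 (hT : T.IsTree) {x w : V} {k : ℕ} (hk : ∃ u, k ≤ T.dist x u)
    (hdeg : 3 ≤ T.degree w) (hw : T.dist x w + 2 ≤ k) :
    k + 1 ≤ ((univ : Finset V).filter fun u => T.dist x u < k).card := by
  rw [bn_fiber_decomp hT x k]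
  have hmem : T.dist x w + 1 ∈ Finset.range k := Finset.mem_range.mpr (by omega)
  rw [← Finset.add_sum_erase _ _ hmem]
  have h1 : 2 ≤ (((univ : Finset V).filter fun u => T.dist x u < k).filter
      fun u => T.dist x u = T.dist x w + 1).card := bn_fiber_children hT hdeg hw
  have h2 : k - 1 ≤ ∑ i ∈ (Finset.range k).erase (T.dist x w + 1),
      (((univ : Finset V).filter fun u => T.dist x u < k).filter
        fun u => T.dist x u = i).card := by
    calc k - 1 = ∑ _i ∈ (Finset.range k).erase (T.dist x w + 1), 1 := by
          simp [Finset.card_erase_of_mem hmem]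
      _ ≤ _ := Finset.sum_le_sum fun i hi =>
          bn_fiber_one hT hk (Finset.mem_range.mp (Finset.mem_of_mem_erase hi))
  omega

private lemma bn_SL2 (hT : T.IsTree) {x w w' : V} {k : ℕ} (hk : ∃ u, k ≤ T.dist x u)
    (hne : w ≠ w') (hdeg : 3 ≤ T.degree w) (hdeg' : 3 ≤ T.degree w')
    (hw : T.dist x w + 2 ≤ k) (hw' : T.dist x w' + 2 ≤ k) :
    k + 2 ≤ ((univ : Finset V).filter fun u => T.dist x u < k).card := by
  by_cases hdd : T.dist x w = T.dist x w'
  · -- same level: the level above contains ≥ 4 vertices (2 children each, disjoint)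
    rw [bn_fiber_decomp hT x k]
    have hmem : T.dist x w + 1 ∈ Finset.range k := Finset.mem_range.mpr (by omega)
    rw [← Finset.add_sum_erase _ _ hmem]
    have hCsub : ((T.neighborFinset w).filter fun y => T.dist x y = T.dist x w + 1) ∪
        ((T.neighborFinset w').filter fun y => T.dist x y = T.dist x w' + 1) ⊆
        (((univ : Finset V).filter fun u => T.dist x u < k).filter
          fun u => T.dist x u = T.dist x w + 1) := by
      intro y hy
      rcases Finset.mem_union.mp hy with h | h <;> rw [Finset.mem_filter] at h <;>
        simp only [Finset.mem_filter, Finset.mem_univ, true_and] <;>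
        refine ⟨by omega, by omega⟩
    have hdisj : Disjoint ((T.neighborFinset w).filter fun y => T.dist x y = T.dist x w + 1)
        ((T.neighborFinset w').filter fun y => T.dist x y = T.dist x w' + 1) := by
      rw [Finset.disjoint_left]
      intro y hy hy'
      rw [Finset.mem_filter, T.mem_neighborFinset] at hy hy'
      exact hne (bn_parent_unique hT (x := x) hy.1.symm hy'.1.symm (by omega) (by omega))
    have h4 : 4 ≤ (((univ : Finset V).filter fun u => T.dist x u < k).filter
        fun u => T.dist x u = T.dist x w + 1).card := by
      have := Finset.card_le_card hCsub
      rw [Finset.card_union_of_disjoint hdisj] at this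
      have c1 := bn_children_two hT x hdeg
      have c2 := bn_children_two hT x hdeg'
      omega
    have h2 : k - 1 ≤ ∑ i ∈ (Finset.range k).erase (T.dist x w + 1),
        (((univ : Finset V).filter fun u => T.dist x u < k).filter
          fun u => T.dist x u = i).card := by
      calc k - 1 = ∑ _i ∈ (Finset.range k).erase (T.dist x w + 1), 1 := by
            simp [Finset.card_erase_of_mem hmem]
        _ ≤ _ := Finset.sum_le_sum fun i hi =>
            bn_fiber_one hT hk (Finset.mem_range.mp (Finset.mem_of_mem_erase hi))
    omega
  · -- different levels: two distinct levels with ≥ 2 vertices each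
    rw [bn_fiber_decomp hT x k]
    have hmem : T.dist x w + 1 ∈ Finset.range k := Finset.mem_range.mpr (by omega)
    have hmem' : T.dist x w' + 1 ∈ (Finset.range k).erase (T.dist x w + 1) :=
      Finset.mem_erase.mpr ⟨by omega, Finset.mem_range.mpr (by omega)⟩
    rw [← Finset.add_sum_erase _ _ hmem, ← Finset.add_sum_erase _ _ hmem']
    have c1 := bn_fiber_children hT hdeg hw
    have c2 := bn_fiber_children hT hdeg' hw'
    have h2 : k - 2 ≤ ∑ i ∈ ((Finset.range k).erase (T.dist x w + 1)).erase (T.dist x w' + 1),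
        (((univ : Finset V).filter fun u => T.dist x u < k).filter
          fun u => T.dist x u = i).card := by
      calc k - 2 = ∑ _i ∈ ((Finset.range k).erase (T.dist x w + 1)).erase (T.dist x w' + 1), 1 := by
            simp [Finset.card_erase_of_mem hmem', Finset.card_erase_of_mem hmem]; omega
        _ ≤ _ := Finset.sum_le_sum fun i hi =>
            bn_fiber_one hT hk (Finset.mem_range.mp
              (Finset.mem_of_mem_erase (Finset.mem_of_mem_erase hi)))
    omega

private lemma bn_main (hT : T.IsTree) {f : V → ℕ} (hf : BnIndep T f)
    (hb : (branchSet T).card ≤ 2) :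
    bweight f + (branchSet T).card ≤ Fintype.card V := by
  classical
  set S : Finset V := univ.filter fun x => 0 < f x with hS
  set O : V → Finset V := fun x => univ.filter fun u => T.dist x u < f x with hOdef
  have hSmem : ∀ x, x ∈ S ↔ 0 < f x := by intro x; simp [hS]
  have hOmem : ∀ x u, u ∈ O x ↔ T.dist x u < f x := by intro x u; simp [hOdef]
  -- hearing
  have hHears : ∀ x u, x ∈ S → u ∈ O x → Hears T f u x := by
    intro x u hx hu
    exact ⟨(hSmem x).mp hx, by rw [SimpleGraph.dist_comm]; exact le_of_lt ((hOmem x u).mp hu)⟩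
  -- disjointness of open balls
  have hOD : ∀ x ∈ S, ∀ y ∈ S, x ≠ y → Disjoint (O x) (O y) := by
    intro x hx y hy hxy
    rw [Finset.disjoint_left]
    intro u hux huy
    have h := hf.2 u x y hxy (hHears x u hx hux) (hHears y u hy huy)
    have := (hOmem x u).mp hux
    rw [SimpleGraph.dist_comm] at h
    omega
  -- boundary vertices are outside all open balls
  have hOut : ∀ x ∈ S, ∀ c, T.dist x c = f x → ∀ y ∈ S, c ∉ O y := by
    intro x hx c hc y hy hmem
    by_cases hxy : y = x
    · subst hxy; have := (hOmem y c).mp hmem; omega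
    · have h := hf.2 c y x hxy (hHears y c hy hmem)
        ⟨(hSmem x).mp hx, by rw [SimpleGraph.dist_comm]; exact le_of_eq hc⟩
      have := (hOmem y c).mp hmem
      rw [SimpleGraph.dist_comm] at h
      omega
  -- eccentricity
  have hecc : ∀ x ∈ S, ∃ u, f x ≤ T.dist x u := by
    intro x hx
    have h := hf.1 x
    rw [gecc] at h
    have h2 := (Finset.le_sup_iff (show (⊥ : ℕ) < f x from (hSmem x).mp hx)).mp h
    obtain ⟨u, _, hu⟩ := h2
    exact ⟨u, hu⟩
  -- bounds
  have hbound_out : ∀ x ∈ S, ∀ D : Finset V, (∀ e ∈ D, e ∉ O x) → f x ≤ (O x \ D).card := by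
    intro x hx D hD
    have : O x \ D = O x := by
      rw [Finset.sdiff_eq_self_iff_disjoint]
      exact Finset.disjoint_right.mpr hD
    rw [this]
    exact (bn_SL0 hT (hecc x hx) : f x ≤ (O x).card)
  have hbound_one : ∀ x ∈ S, ∀ (w : V) (D : Finset V), 3 ≤ T.degree w →
      T.dist x w + 2 ≤ f x → (∀ e ∈ D, e ∈ O x → e = w) → f x ≤ (O x \ D).card := by
    intro x hx w D hdeg hw hD
    have hwO : w ∈ O x := (hOmem x w).mpr (by omega)
    have hsub : O x \ {w} ⊆ O x \ D := by
      intro v hv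
      rw [Finset.mem_sdiff] at hv ⊢
      refine ⟨hv.1, fun hvD => ?_⟩
      have hvw : v ≠ w := by simpa using hv.2
      exact hvw (hD v hvD hv.1)
    have hcard : (O x \ {w}).card = (O x).card - 1 := by
      rw [Finset.card_sdiff_of_subset (Finset.singleton_subset_iff.mpr hwO), Finset.card_singleton]
    have hsl : f x + 1 ≤ (O x).card := bn_SL1 hT (hecc x hx) hdeg hw
    have := Finset.card_le_card hsub
    omega
  have hbound_two : ∀ x ∈ S, ∀ (w w' : V) (D : Finset V), w ≠ w' →
      3 ≤ T.degree w → 3 ≤ T.degree w' →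
      T.dist x w + 2 ≤ f x → T.dist x w' + 2 ≤ f x →
      (∀ e ∈ D, e ∈ O x → e = w ∨ e = w') → f x ≤ (O x \ D).card := by
    intro x hx w w' D hne hdeg hdeg' hw hw' hD
    have hwO : w ∈ O x := (hOmem x w).mpr (by omega)
    have hwO' : w' ∈ O x := (hOmem x w').mpr (by omega)
    have hsub : O x \ {w, w'} ⊆ O x \ D := by
      intro v hv
      rw [Finset.mem_sdiff] at hv ⊢
      refine ⟨hv.1, fun hvD => ?_⟩
      have := hv.2
      rcases hD v hvD hv.1 with h | h <;> simp [h] at this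
    have hss : ({w, w'} : Finset V) ⊆ O x := by
      intro v hv; rcases Finset.mem_insert.mp hv with h | h
      · subst h; exact hwO
      · rw [Finset.mem_singleton.mp h]; exact hwO'
    have hcard : (O x \ {w, w'}).card = (O x).card - 2 := by
      rw [Finset.card_sdiff_of_subset hss, Finset.card_pair hne]
    have hsl : f x + 2 ≤ (O x).card := bn_SL2 hT (hecc x hx) hne hdeg hdeg' hw hw'
    have := Finset.card_le_card hsub
    omega
  -- trichotomy for a branch vertex
  have htri : ∀ w : V, (∀ x ∈ S, w ∉ O x) ∨ (∃ x, x ∈ S ∧ T.dist x w + 1 = f x) ∨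
      (∃ x, x ∈ S ∧ T.dist x w + 2 ≤ f x) := by
    intro w
    by_cases h : ∀ x ∈ S, w ∉ O x
    · exact Or.inl h
    · push_neg at h
      obtain ⟨x, hx, hw⟩ := h
      have hlt := (hOmem x w).mp hw
      by_cases h2 : T.dist x w + 1 = f x
      · exact Or.inr (Or.inl ⟨x, hx, h2⟩)
      · exact Or.inr (Or.inr ⟨x, hx, by omega⟩)
  -- a T3 vertex is only inside its own ball
  have hT3out : ∀ (w x₀ : V), x₀ ∈ S → T.dist x₀ w + 2 ≤ f x₀ →
      ∀ x ∈ S, x ≠ x₀ → w ∉ O x := by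
    intro w x₀ hx₀ h3 x hx hxx hmem
    have hw₀ : w ∈ O x₀ := (hOmem x₀ w).mpr (by omega)
    exact (Finset.disjoint_left.mp (hOD x hx x₀ hx₀ hxx) hmem) hw₀
  -- choosing an outside boundary vertex near a T2 branch vertex
  have hpick : ∀ x ∈ S, ∀ w : V, 3 ≤ T.degree w → T.dist x w + 1 = f x →
      ∀ avoid : V, ∃ c, c ≠ avoid ∧ ∀ y ∈ S, c ∉ O y := by
    intro x hx w hdeg hd avoid
    have h2 : 1 < ((T.neighborFinset w).filter fun y => T.dist x y = T.dist x w + 1).card := by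
      have := bn_children_two hT x (w := w) hdeg
      omega
    obtain ⟨c, hcC, hca⟩ := Finset.exists_mem_ne h2 avoid
    rw [Finset.mem_filter] at hcC
    have hc : T.dist x c = f x := by omega
    exact ⟨c, hca, hOut x hx c hc⟩
  -- membership in branchSet
  have hbr : ∀ w, w ∈ branchSet T ↔ 3 ≤ T.degree w := by
    intro w; simp [branchSet]
  -- main construction
  obtain ⟨D, hDcard, hDbound⟩ : ∃ D : Finset V, D.card = (branchSet T).card ∧
      ∀ x ∈ S, f x ≤ (O x \ D).card := by
    interval_cases hc : (branchSet T).card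
    · refine ⟨∅, by simp, ?_⟩
      intro x hx
      rw [Finset.sdiff_empty]
      exact (bn_SL0 hT (hecc x hx) : f x ≤ (O x).card)
    · obtain ⟨w, hwset⟩ := Finset.card_eq_one.mp hc
      have hwdeg : 3 ≤ T.degree w := (hbr w).mp (hwset ▸ Finset.mem_singleton_self w)
      rcases htri w with h1 | ⟨x₀, hx₀, h2⟩ | ⟨x₀, hx₀, h3⟩
      · refine ⟨{w}, by simp, ?_⟩
        intro x hx
        exact hbound_out x hx {w} (fun e he => by rw [Finset.mem_singleton.mp he]; exact h1 x hx)
      · obtain ⟨c, -, hc'⟩ := hpick x₀ hx₀ w hwdeg h2 w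
        refine ⟨{c}, by simp, ?_⟩
        intro x hx
        exact hbound_out x hx {c} (fun e he => by rw [Finset.mem_singleton.mp he]; exact hc' x hx)
      · refine ⟨{w}, by simp, ?_⟩
        intro x hx
        by_cases hxx : x = x₀
        · subst hxx
          exact hbound_one x hx w {w} hwdeg h3 (fun e he _ => Finset.mem_singleton.mp he)
        · exact hbound_out x hx {w}
            (fun e he => by rw [Finset.mem_singleton.mp he]; exact hT3out w x₀ hx₀ h3 x hx hxx)
    · obtain ⟨w, w', hne, hwset⟩ := Finset.card_eq_two.mp hc
      have hwdeg : 3 ≤ T.degree w := (hbr w).mp (by rw [hwset]; simp)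
      have hwdeg' : 3 ≤ T.degree w' := (hbr w').mp (by rw [hwset]; simp)
      rcases htri w with A1 | ⟨x₀, hx₀, A2⟩ | ⟨x₀, hx₀, A3⟩ <;>
        rcases htri w' with B1 | ⟨x₁, hx₁, B2⟩ | ⟨x₁, hx₁, B3⟩
      -- A1 B1
      · refine ⟨{w, w'}, by rw [Finset.card_pair hne], ?_⟩
        intro x hx
        refine hbound_out x hx _ (fun e he => ?_)
        rcases Finset.mem_insert.mp he with h | h
        · subst h; exact A1 x hx
        · rw [Finset.mem_singleton.mp h]; exact B1 x hx
      -- A1 B2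
      · obtain ⟨c', hc'w, hc'⟩ := hpick x₁ hx₁ w' hwdeg' B2 w
        refine ⟨{w, c'}, by rw [Finset.card_pair (Ne.symm hc'w)], ?_⟩
        intro x hx
        refine hbound_out x hx _ (fun e he => ?_)
        rcases Finset.mem_insert.mp he with h | h
        · subst h; exact A1 x hx
        · rw [Finset.mem_singleton.mp h]; exact hc' x hx
      -- A1 B3
      · refine ⟨{w, w'}, by rw [Finset.card_pair hne], ?_⟩
        intro x hx
        by_cases hxx : x = x₁
        · subst hxx
          refine hbound_one x hx w' _ hwdeg' B3 (fun e he heO => ?_)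
          rcases Finset.mem_insert.mp he with h | h
          · exact absurd heO (h ▸ A1 x hx)
          · exact Finset.mem_singleton.mp h
        · refine hbound_out x hx _ (fun e he => ?_)
          rcases Finset.mem_insert.mp he with h | h
          · subst h; exact A1 x hx
          · rw [Finset.mem_singleton.mp h]; exact hT3out w' x₁ hx₁ B3 x hx hxx
      -- A2 B1
      · obtain ⟨c, hcw, hc⟩ := hpick x₀ hx₀ w hwdeg A2 w'
        refine ⟨{c, w'}, by rw [Finset.card_pair hcw], ?_⟩
        intro x hx
        refine hbound_out x hx _ (fun e he => ?_)
        rcases Finset.mem_insert.mp he with h | h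
        · subst h; exact hc x hx
        · rw [Finset.mem_singleton.mp h]; exact B1 x hx
      -- A2 B2
      · obtain ⟨c, hcw, hc⟩ := hpick x₀ hx₀ w hwdeg A2 w'
        obtain ⟨c', hc'c, hc'⟩ := hpick x₁ hx₁ w' hwdeg' B2 c
        refine ⟨{c, c'}, by rw [Finset.card_pair (Ne.symm hc'c)], ?_⟩
        intro x hx
        refine hbound_out x hx _ (fun e he => ?_)
        rcases Finset.mem_insert.mp he with h | h
        · subst h; exact hc x hx
        · rw [Finset.mem_singleton.mp h]; exact hc' x hx
      -- A2 B3
      · obtain ⟨c, hcw, hc⟩ := hpick x₀ hx₀ w hwdeg A2 w'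
        refine ⟨{c, w'}, by rw [Finset.card_pair hcw], ?_⟩
        intro x hx
        by_cases hxx : x = x₁
        · subst hxx
          refine hbound_one x hx w' _ hwdeg' B3 (fun e he heO => ?_)
          rcases Finset.mem_insert.mp he with h | h
          · exact absurd heO (h ▸ hc x hx)
          · exact Finset.mem_singleton.mp h
        · refine hbound_out x hx _ (fun e he => ?_)
          rcases Finset.mem_insert.mp he with h | h
          · subst h; exact hc x hx
          · rw [Finset.mem_singleton.mp h]; exact hT3out w' x₁ hx₁ B3 x hx hxx
      -- A3 B1
      · refine ⟨{w, w'}, by rw [Finset.card_pair hne], ?_⟩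
        intro x hx
        by_cases hxx : x = x₀
        · subst hxx
          refine hbound_one x hx w _ hwdeg A3 (fun e he heO => ?_)
          rcases Finset.mem_insert.mp he with h | h
          · exact h
          · exact absurd heO ((Finset.mem_singleton.mp h) ▸ B1 x hx)
        · refine hbound_out x hx _ (fun e he => ?_)
          rcases Finset.mem_insert.mp he with h | h
          · rw [h]; exact hT3out w x₀ hx₀ A3 x hx hxx
          · rw [Finset.mem_singleton.mp h]; exact B1 x hx
      -- A3 B2
      · obtain ⟨c', hc'w, hc'⟩ := hpick x₁ hx₁ w' hwdeg' B2 w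
        refine ⟨{w, c'}, by rw [Finset.card_pair (Ne.symm hc'w)], ?_⟩
        intro x hx
        by_cases hxx : x = x₀
        · subst hxx
          refine hbound_one x hx w _ hwdeg A3 (fun e he heO => ?_)
          rcases Finset.mem_insert.mp he with h | h
          · exact h
          · exact absurd heO ((Finset.mem_singleton.mp h) ▸ hc' x hx)
        · refine hbound_out x hx _ (fun e he => ?_)
          rcases Finset.mem_insert.mp he with h | h
          · rw [h]; exact hT3out w x₀ hx₀ A3 x hx hxx
          · rw [Finset.mem_singleton.mp h]; exact hc' x hx
      -- A3 B3
      · refine ⟨{w, w'}, by rw [Finset.card_pair hne], ?_⟩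
        intro x hx
        by_cases hxx0 : x = x₀
        · subst hxx0
          by_cases hxx1 : x = x₁
          · subst hxx1
            refine hbound_two x hx w w' _ hne hwdeg hwdeg' A3 B3 (fun e he _ => ?_)
            rcases Finset.mem_insert.mp he with h | h
            · exact Or.inl h
            · exact Or.inr (Finset.mem_singleton.mp h)
          · refine hbound_one x hx w _ hwdeg A3 (fun e he heO => ?_)
            rcases Finset.mem_insert.mp he with h | h
            · exact h
            · exact absurd heO ((Finset.mem_singleton.mp h) ▸
                hT3out w' x₁ hx₁ B3 x hx hxx1)
        · by_cases hxx1 : x = x₁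
          · subst hxx1
            refine hbound_one x hx w' _ hwdeg' B3 (fun e he heO => ?_)
            rcases Finset.mem_insert.mp he with h | h
            · exact absurd heO (h ▸ hT3out w x₀ hx₀ A3 x hx hxx0)
            · exact Finset.mem_singleton.mp h
          · refine hbound_out x hx _ (fun e he => ?_)
            rcases Finset.mem_insert.mp he with h | h
            · rw [h]; exact hT3out w x₀ hx₀ A3 x hx hxx0
            · rw [Finset.mem_singleton.mp h]; exact hT3out w' x₁ hx₁ B3 x hx hxx1
  -- final count
  have hdisj : ∀ x ∈ S, ∀ y ∈ S, x ≠ y → Disjoint (O x \ D) (O y \ D) := by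
    intro x hx y hy hxy
    exact (hOD x hx y hy hxy).mono Finset.sdiff_subset Finset.sdiff_subset
  have h1 : ∑ x ∈ S, f x ≤ ∑ x ∈ S, (O x \ D).card := Finset.sum_le_sum hDbound
  have h2 : ∑ x ∈ S, (O x \ D).card = (S.biUnion fun x => O x \ D).card :=
    (Finset.card_biUnion hdisj).symm
  have h3 : (S.biUnion fun x => O x \ D) ⊆ univ \ D := by
    rw [Finset.biUnion_subset]
    intro x _
    exact Finset.sdiff_subset_sdiff (Finset.subset_univ _) le_rfl
  have h4 : (univ \ D : Finset V).card = Fintype.card V - D.card := by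
    rw [Finset.card_sdiff_of_subset (Finset.subset_univ D), Finset.card_univ]
  have h5 : bweight f = ∑ x ∈ S, f x := by
    rw [bweight]
    refine (Finset.sum_subset (Finset.filter_subset _ _) (fun x _ hxS => ?_)).symm
    have := (hSmem x).not.mp hxS
    omega
  have h6 := Finset.card_le_card h3
  have h7 : D.card ≤ Fintype.card V := by
    rw [← Finset.card_univ]; exact Finset.card_le_card (Finset.subset_univ D)
  omega

end

/-- If `T` is a tree with `b(T) ≤ 2`, then `α_bn(T) ≤ n - b(T) + ρ(T)`. -/
theorem stmt12 {V : Type*} [Fintype V] (T : SimpleGraph V) (hT : T.IsTree)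
    (hb : (branchSet T).card ≤ 2) :
    alphaBn T ≤ Fintype.card V - (branchSet T).card + (rset T).card := by
  classical
  refine csSup_le' ?_
  rintro wgt ⟨f, hf, rfl⟩
  have h := bn_main hT hf hb
  have h7 : (branchSet T).card ≤ Fintype.card V := by
    rw [← Finset.card_univ]
    exact Finset.card_le_card (Finset.subset_univ _)
  omega
end

section
/- For every graph G, α_bn(G) ≤ α_h(G), where α_h(G) is the maximum weight of a hearing independent broadcast. -/
open SimpleGraph Finset
open scoped Classical

noncomputable section

/-- For every graph `G`, `α_bn(G) ≤ α_h(G)`. -/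
theorem stmt15 {V : Type*} [Fintype V] (G : SimpleGraph V) :
    alphaBn G ≤ alphaH G := by
  have hsub : {w | ∃ f, BnIndep G f ∧ bweight f = w} ⊆
      {w | ∃ f, HIndep G f ∧ bweight f = w} := by
    rintro w ⟨f, ⟨hb, hind⟩, rfl⟩
    refine ⟨f, ⟨hb, fun u v huv hu hv => ?_⟩, rfl⟩
    by_contra h
    push_neg at h
    have h2 := hind u u v huv ⟨hu, by rw [SimpleGraph.dist_self]; exact Nat.zero_le _⟩ ⟨hv, h⟩
    simp [SimpleGraph.dist_self] at h2
    omega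
  refine csSup_le_csSup ⟨∑ v, gecc G v, ?_⟩ ⟨0, (fun _ => 0), ⟨fun v => Nat.zero_le _,
    fun w v₁ v₂ _ h₁ _ => absurd h₁.1 (lt_irrefl 0)⟩, by simp [bweight]⟩ hsub
  rintro w ⟨f, hf, rfl⟩
  exact Finset.sum_le_sum fun v _ => hf.1 v
end
end
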